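/- Let E be a module with a bilinear bracket [·,·] and let I, J : E → E be anti-commuting linear maps. Then for all X, Y in E: 2·T(I∘J)(X,Y) = T(I)(JX,JY) - J(T(I)(JX,Y) + T(I)(X,JY)) - J^2(T(I)(X,Y)) + T(J)(IX,IY) - I(T(J)(IX,Y) + T(J)(X,IY)) - I^2(T(J)(X,Y)). -/

import Mathlib

variable {R : Type*} [CommRing R] {E : Type*} [AddCommGroup E] [Module R E]

/-- The underlying binary operation of a bilinear bracket. -/
def br2 (b : E →ₗ[R] E →ₗ[R] E) : E → E → E := fun x y => b x y

/-- Deformation of a bracket `b` by an endomorphism `I`: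
`[X,Y]_I = [IX,Y] + [X,IY] - I [X,Y]`. -/
def deform (I : Module.End R E) (b : E → E → E) : E → E → E :=
  fun X Y => b (I X) Y + b X (I Y) - I (b X Y)

/-- Nijenhuis torsion of `I` with respect to the bracket `b`. -/
def torsion (I : Module.End R E) (b : E → E → E) : E → E → E :=
  fun X Y => b (I X) (I Y) - I (deform I b X Y)

theorem stmt12 (b : E →ₗ[R] E →ₗ[R] E) (I J : Module.End R E)
    (hanti : I * J = -(J * I)) (X Y : E) :
    (2 : ℕ) • torsion (I * J) (br2 b) X Y
      = torsion I (br2 b) (J X) (J Y)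
        - J (torsion I (br2 b) (J X) Y + torsion I (br2 b) X (J Y))
        - (J ^ 2) (torsion I (br2 b) X Y)
        + torsion J (br2 b) (I X) (I Y)
        - I (torsion J (br2 b) (I X) Y + torsion J (br2 b) X (I Y))
        - (I ^ 2) (torsion J (br2 b) X Y) := by
  have hIJ : ∀ x : E, I (J x) = -(J (I x)) := fun x => by
    have := congrArg (fun f : Module.End R E => f x) hanti
    simpa using this
  simp only [torsion, deform, br2, Module.End.mul_apply, pow_two, two_smul,
    hIJ, map_add, map_sub, map_neg, LinearMap.add_apply, LinearMap.sub_apply,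
    LinearMap.neg_apply]
  abel
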